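/- Let M be a real symmetric n×n matrix with spectral decomposition M = Σ_j θ_j E_j and let U(t) = exp(i t M). If unit vectors v and w admit pretty good state transfer, i.e., sup over t ≥ 0 of |⟨w, U(t) v⟩| = 1 (equivalently, for every ε > 0 there is a time t with |⟨w, U(t) v⟩| > 1 − ε), then v and w are strongly cospectral: for each eigenvalue θ_j there exists γ_j with |γ_j| = 1 such that E_j v = γ_j E_j w. -/

import Mathlib

open Matrix Finset


private lemma aux_sum_mulVec {d n : ℕ} (A : Fin d → Matrix (Fin n) (Fin n) ℂ) (x : Fin n → ℂ) :
    (∑ j, A j) *ᵥ x = ∑ j, A j *ᵥ x :=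
  map_sum (Matrix.mulVec.addMonoidHomLeft x) A Finset.univ

private lemma aux_dotProduct_sum {d n : ℕ} (u : Fin n → ℂ) (f : Fin d → Fin n → ℂ) :
    u ⬝ᵥ (∑ j, f j) = ∑ j, u ⬝ᵥ f j := by
  simp [dotProduct, Finset.mul_sum]
  exact Finset.sum_comm

/-- Pretty good state transfer between unit states `v`, `w` implies strong cospectrality. -/
theorem stmt1 {n d : ℕ}
    (θ : Fin d → ℝ) (hθ : Function.Injective θ)
    (E : Fin d → Matrix (Fin n) (Fin n) ℂ)
    (hreal : ∀ j k l, (E j k l).im = 0)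
    (hsymm : ∀ j, (E j)ᵀ = E j)
    (hidem : ∀ j, E j * E j = E j)
    (horth : ∀ j k, j ≠ k → E j * E k = 0)
    (hsum : ∑ j, E j = 1)
    (M : Matrix (Fin n) (Fin n) ℂ)
    (hM : M = ∑ j, (θ j : ℂ) • E j)
    (v w : Fin n → ℂ)
    (hv : star v ⬝ᵥ v = 1) (hw : star w ⬝ᵥ w = 1)
    (hpgst : ∀ ε > (0 : ℝ), ∃ t : ℝ, 0 ≤ t ∧
      ‖star w ⬝ᵥ ((∑ j, Complex.exp (Complex.I * ((t * θ j : ℝ) : ℂ)) • E j) *ᵥ v)‖ > 1 - ε) :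
    ∀ j, ∃ γ : ℂ, ‖γ‖ = 1 ∧ (E j) *ᵥ v = γ • ((E j) *ᵥ w) := by
  -- Each `E j` is Hermitian.
  have hE : ∀ j, (E j)ᴴ = E j := by
    intro j
    ext k l
    rw [Matrix.conjTranspose_apply]
    have h1 : E j l k = E j k l := by
      conv_lhs => rw [← hsymm j]
      rfl
    rw [h1]
    apply Complex.ext
    · simp [Complex.conj_re]
    · simp [Complex.conj_im, hreal j k l]
  -- Adjoint property.
  have hadj : ∀ j (x y : Fin n → ℂ), star (E j *ᵥ x) ⬝ᵥ y = star x ⬝ᵥ (E j *ᵥ y) := by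
    intro j x y
    rw [Matrix.star_mulVec, hE j, ← Matrix.dotProduct_mulVec]
  -- `E j *ᵥ (E j *ᵥ x) = E j *ᵥ x`.
  have hEE : ∀ j (x : Fin n → ℂ), E j *ᵥ (E j *ᵥ x) = E j *ᵥ x := by
    intro j x
    rw [Matrix.mulVec_mulVec, hidem j]
  -- Move to Euclidean space.
  set ι : (Fin n → ℂ) → EuclideanSpace ℂ (Fin n) := ⇑(WithLp.equiv 2 (Fin n → ℂ)).symm with hι
  set V : Fin d → EuclideanSpace ℂ (Fin n) := fun j => ι (E j *ᵥ v) with hV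
  set W : Fin d → EuclideanSpace ℂ (Fin n) := fun j => ι (E j *ᵥ w) with hW
  have hinner : ∀ (x y : Fin n → ℂ), (inner ℂ (ι x) (ι y) : ℂ) = star x ⬝ᵥ y := fun x y =>
    dotProduct_comm y (star x)
  -- The overlap coefficients.
  set a : Fin d → ℂ := fun j => star w ⬝ᵥ (E j *ᵥ v) with ha
  have ha_inner : ∀ j, (inner ℂ (W j) (V j) : ℂ) = a j := by
    intro j
    rw [hinner, hadj, hEE]
  -- Norm decompositions.
  have hnormdecomp : ∀ (x : Fin n → ℂ), star x ⬝ᵥ x = 1 →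
      ∑ j, ‖ι (E j *ᵥ x)‖ ^ 2 = 1 := by
    intro x hx
    have h1 : ∀ j, (inner ℂ (ι (E j *ᵥ x)) (ι (E j *ᵥ x)) : ℂ) = star x ⬝ᵥ (E j *ᵥ x) := by
      intro j
      rw [hinner, hadj, hEE]
    have h2 : ∑ j, (inner ℂ (ι (E j *ᵥ x)) (ι (E j *ᵥ x)) : ℂ) = 1 := by
      simp only [h1]
      rw [← aux_dotProduct_sum, ← aux_sum_mulVec, hsum, Matrix.one_mulVec, hx]
    have h3 : ∀ j, (inner ℂ (ι (E j *ᵥ x)) (ι (E j *ᵥ x)) : ℂ)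
        = ((‖ι (E j *ᵥ x)‖ : ℂ)) ^ 2 := fun j => inner_self_eq_norm_sq_to_K _
    rw [Finset.sum_congr rfl (fun j _ => h3 j)] at h2
    have h4 : ((∑ j, ‖ι (E j *ᵥ x)‖ ^ 2 : ℝ) : ℂ) = 1 := by
      push_cast
      exact h2
    exact_mod_cast h4
  have hVnorm : ∑ j, ‖V j‖ ^ 2 = 1 := hnormdecomp v hv
  have hWnorm : ∑ j, ‖W j‖ ^ 2 = 1 := hnormdecomp w hw
  -- PGST gives `1 ≤ ∑ ‖a j‖`.
  have h1le : (1 : ℝ) ≤ ∑ j, ‖a j‖ := by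
    by_contra hcon
    push_neg at hcon
    obtain ⟨t, _, hgt⟩ := hpgst (1 - ∑ j, ‖a j‖) (by linarith)
    have hexpand : star w ⬝ᵥ ((∑ j, Complex.exp (Complex.I * ((t * θ j : ℝ) : ℂ)) • E j) *ᵥ v)
        = ∑ j, Complex.exp (Complex.I * ((t * θ j : ℝ) : ℂ)) * a j := by
      rw [aux_sum_mulVec, aux_dotProduct_sum]
      refine Finset.sum_congr rfl fun j _ => ?_
      rw [Matrix.smul_mulVec, dotProduct_smul, smul_eq_mul]
    rw [hexpand] at hgt
    have hbound : ‖∑ j, Complex.exp (Complex.I * ((t * θ j : ℝ) : ℂ)) * a j‖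
        ≤ ∑ j, ‖a j‖ := by
      refine (norm_sum_le _ _).trans (Finset.sum_le_sum fun j _ => ?_)
      rw [norm_mul]
      have : ‖Complex.exp (Complex.I * ((t * θ j : ℝ) : ℂ))‖ = 1 := by
        rw [mul_comm]
        exact Complex.norm_exp_ofReal_mul_I _
      rw [this, one_mul]
    linarith
  -- Cauchy-Schwarz per index.
  have h2 : ∀ j, ‖a j‖ ≤ ‖W j‖ * ‖V j‖ := by
    intro j
    rw [← ha_inner j]
    exact norm_inner_le_norm _ _
  -- AM-GM bound on the sum of products.
  have h3 : ∑ j, ‖W j‖ * ‖V j‖ ≤ 1 := by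
    have : ∀ j, ‖W j‖ * ‖V j‖ ≤ (‖W j‖ ^ 2 + ‖V j‖ ^ 2) / 2 := by
      intro j
      nlinarith [sq_nonneg (‖W j‖ - ‖V j‖)]
    calc ∑ j, ‖W j‖ * ‖V j‖ ≤ ∑ j, (‖W j‖ ^ 2 + ‖V j‖ ^ 2) / 2 :=
          Finset.sum_le_sum fun j _ => this j
      _ = 1 := by rw [← Finset.sum_div, Finset.sum_add_distrib, hWnorm, hVnorm]; norm_num
  have hsum_a : ∑ j, ‖a j‖ = ∑ j, ‖W j‖ * ‖V j‖ :=
    le_antisymm (Finset.sum_le_sum fun j _ => h2 j) (by linarith)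
  have hsumWV : ∑ j, ‖W j‖ * ‖V j‖ = 1 := le_antisymm h3 (by linarith)
  -- Per-index equality in Cauchy-Schwarz.
  have heq : ∀ j, ‖a j‖ = ‖W j‖ * ‖V j‖ := by
    intro j
    have := (Finset.sum_eq_sum_iff_of_le fun i (_ : i ∈ Finset.univ) => h2 i).1 hsum_a
    exact this j (Finset.mem_univ j)
  -- Equal norms: `‖W j‖ = ‖V j‖`.
  have hnormeq : ∀ j, ‖W j‖ = ‖V j‖ := by
    have hzero : ∑ j, (‖W j‖ - ‖V j‖) ^ 2 = 0 := by
      have expand : ∀ j, (‖W j‖ - ‖V j‖) ^ 2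
          = ‖W j‖ ^ 2 + ‖V j‖ ^ 2 - 2 * (‖W j‖ * ‖V j‖) := by intro j; ring
      rw [Finset.sum_congr rfl fun j _ => expand j]
      rw [Finset.sum_sub_distrib, Finset.sum_add_distrib, hWnorm, hVnorm,
        ← Finset.mul_sum, hsumWV]
      ring
    intro j
    have := (Finset.sum_eq_zero_iff_of_nonneg fun i _ => sq_nonneg _).1 hzero j
      (Finset.mem_univ j)
    have := sq_eq_zero_iff.1 this
    linarith [this]
  -- Conclude.
  intro j
  by_cases hVj : V j = 0
  · refine ⟨1, by norm_num, ?_⟩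
    have hWj : W j = 0 := by
      have : ‖W j‖ = 0 := by rw [hnormeq j, hVj, norm_zero]
      exact norm_eq_zero.1 this
    have h1 : E j *ᵥ v = 0 := by
      have := congrArg (WithLp.equiv 2 (Fin n → ℂ)) hVj
      simpa [hV, hι] using this
    have h2' : E j *ᵥ w = 0 := by
      have := congrArg (WithLp.equiv 2 (Fin n → ℂ)) hWj
      simpa [hW, hι] using this
    rw [h1, h2', smul_zero]
  · have hWj : W j ≠ 0 := by
      intro h0
      apply hVj
      have : ‖V j‖ = 0 := by rw [← hnormeq j, h0, norm_zero]
      exact norm_eq_zero.1 this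
    have hcs : ‖(inner ℂ (W j) (V j) : ℂ)‖ = ‖W j‖ * ‖V j‖ := by
      rw [ha_inner j]; exact heq j
    obtain ⟨r, hr0, hrV⟩ := (norm_inner_eq_norm_iff hWj hVj).1 hcs
    have hrnorm : ‖r‖ = 1 := by
      have h1 : ‖V j‖ = ‖r‖ * ‖W j‖ := by rw [hrV, norm_smul]
      have h2' : ‖W j‖ ≠ 0 := norm_ne_zero_iff.2 hWj
      rw [← hnormeq j] at h1
      have h3' : ‖r‖ * ‖W j‖ = 1 * ‖W j‖ := by linarith
      exact mul_right_cancel₀ h2' h3'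
    refine ⟨r, hrnorm, ?_⟩
    have := congrArg (WithLp.equiv 2 (Fin n → ℂ)) hrV
    simpa [hV, hW, hι] using this
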